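/- The map (l, j) ↦ H·(z^l x^j) is a bijection from ℤ² onto the set of right cosets of H in F; that is, {c_{l,j} : (l, j) ∈ ℤ²} is a system of representatives of the right cosets of H in F. Likewise {c̃_{l,j} : (l, j) ∈ ℤ²} is a system of representatives of the right cosets of H̃ in F̃. In particular H has infinite index in F. -/

import Mathlib

/-- `ℤ* = ℤ \ {0}`. -/
abbrev Zstar : Type := {n : ℤ // n ≠ 0}

/-- Index set for the free basis `S` (and `S̃`): `(j, l, b)` with `b = false` for `v_j^l`
and `b = true` for `w_j^l`. -/
abbrev SIdx : Type := Zstar × ℤ × Bool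

/-- The free group on three generators `x, y, z`. -/
abbrev F3 : Type := FreeGroup (Fin 3)

/-- The generator `x`. -/
def gx : F3 := FreeGroup.of 0
/-- The generator `y`. -/
def gy : F3 := FreeGroup.of 1
/-- The generator `z`. -/
def gz : F3 := FreeGroup.of 2

/-- `v_j^l = z^{-l} x^j y^{-ρ(j)} z^l`. -/
def vgen (ρ : Equiv.Perm Zstar) (j : Zstar) (l : ℤ) : F3 :=
  gz ^ (-l) * gx ^ j.val * gy ^ (-(ρ j).val) * gz ^ l

/-- `w_j^l = z^{-l} x^j z y^{-θ(j)} z^l`. -/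
def wgen (θ : Equiv.Perm Zstar) (j : Zstar) (l : ℤ) : F3 :=
  gz ^ (-l) * gx ^ j.val * gz * gy ^ (-(θ j).val) * gz ^ l

/-- The element of `S` indexed by `(j, l, b)`. -/
def sElem (ρ θ : Equiv.Perm Zstar) (p : SIdx) : F3 :=
  if p.2.2 then wgen θ p.1 p.2.1 else vgen ρ p.1 p.2.1

/-- The canonical homomorphism from the free group on the index set of `S` to `F`,
sending `(j,l,false) ↦ v_j^l` and `(j,l,true) ↦ w_j^l`. -/
def sMap (ρ θ : Equiv.Perm Zstar) : FreeGroup SIdx →* F3 :=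
  FreeGroup.lift (sElem ρ θ)

/-- `H = ⟨S⟩ ≤ F`. -/
def Hsub (ρ θ : Equiv.Perm Zstar) : Subgroup F3 :=
  Subgroup.closure (Set.range (sElem ρ θ))

/-- The tuple `ω = (ρ, θ, ρ̃, θ̃, ι)`; the bijection `ι : S → S̃` is recorded as a bijection
of the index sets. -/
structure OmegaTuple : Type where
  ρ : Equiv.Perm Zstar
  θ : Equiv.Perm Zstar
  ρt : Equiv.Perm Zstar
  θt : Equiv.Perm Zstar
  ι : SIdx ≃ SIdx

/-- The two maps from the abstract copy of `H` (the free group on the index set of `S`)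
into the two copies of `F₃`: into `F` via `S`, and into `F̃` via `ι` followed by `S̃`. -/
def pushMaps (ω : OmegaTuple) : Bool → (FreeGroup SIdx →* F3) :=
  fun b => if b then (sMap ω.ρt ω.θt).comp (FreeGroup.map ω.ι) else sMap ω.ρ ω.θ

/-- `G(ω) = F *_{H = H̃} F̃`, the amalgamated product. -/
def GroupOmega (ω : OmegaTuple) : Type := Monoid.PushoutI (pushMaps ω)

instance (ω : OmegaTuple) : Group (GroupOmega ω) := by
  delta GroupOmega; infer_instance

/-- The canonical map `F → G(ω)`. -/
def ofb (ω : OmegaTuple) : F3 →* GroupOmega ω := Monoid.PushoutI.of (φ := pushMaps ω) false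

/-- The canonical map `F̃ → G(ω)`. -/
def oft (ω : OmegaTuple) : F3 →* GroupOmega ω := Monoid.PushoutI.of (φ := pushMaps ω) true

/-- `c_{l,j} = z^l x^j`. -/
def cElem (l j : ℤ) : F3 := gz ^ l * gx ^ j

/-- `d_{M,M'}^l = v_M^l (v_{M'}^l)⁻¹`. -/
def dElem (ρ : Equiv.Perm Zstar) (M M' : Zstar) (l : ℤ) : F3 :=
  vgen ρ M l * (vgen ρ M' l)⁻¹

/-- The index `(j,l,b)` corresponds to an element of `S_N` (resp. `S̃_N`):
`j ∈ [-N,N] ∩ ℤ*` and `l ∈ [-N,N]`. -/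
def InSN (N : ℤ) (p : SIdx) : Prop :=
  p.1.val ∈ Set.Icc (-N) N ∧ p.2.1 ∈ Set.Icc (-N) N

/-- A (total) map `g` extends a partial bijection `f`. -/
def Extends {α β : Type*} (g : α → β) (f : PartialEquiv α β) : Prop :=
  ∀ a ∈ f.source, g a = f a

/-- A partial bijection of `ℤ*` is independent from `[-N, N]`: its domain and image
are disjoint from `[-N, N]`. -/
def IndepFromIcc (f : PartialEquiv Zstar Zstar) (N : ℤ) : Prop :=
  (∀ a ∈ f.source, a.val ∉ Set.Icc (-N) N) ∧ (∀ a ∈ f.target, a.val ∉ Set.Icc (-N) N)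

/-- A partial bijection of the index set is independent from `(S_N, S̃_N)`:
its domain misses `S_N` and its image misses `S̃_N`. -/
def IndepFromSN (f : PartialEquiv SIdx SIdx) (N : ℤ) : Prop :=
  (∀ p ∈ f.source, ¬ InSN N p) ∧ (∀ p ∈ f.target, ¬ InSN N p)

section Aux

open Equiv

/-- Extension of a permutation of `ℤ*` to a permutation of `ℤ` fixing `0`. -/
def extPerm (ρ : Equiv.Perm Zstar) : Equiv.Perm ℤ where
  toFun n := if h : n = 0 then 0 else (ρ ⟨n, h⟩).val
  invFun n := if h : n = 0 then 0 else (ρ.symm ⟨n, h⟩).val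
  left_inv n := by
    rcases eq_or_ne n 0 with rfl | h
    · simp
    · dsimp only
      rw [dif_neg h, dif_neg (ρ ⟨n, h⟩).2]
      simp
  right_inv n := by
    rcases eq_or_ne n 0 with rfl | h
    · simp
    · dsimp only
      rw [dif_neg h, dif_neg (ρ.symm ⟨n, h⟩).2]
      simp

@[simp] lemma extPerm_zero (ρ : Equiv.Perm Zstar) : extPerm ρ 0 = 0 := by simp [extPerm]

lemma extPerm_ne (ρ : Equiv.Perm Zstar) {n : ℤ} (h : n ≠ 0) :
    extPerm ρ n = (ρ ⟨n, h⟩).val := by simp [extPerm, h]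

lemma extPerm_symm_ne (ρ : Equiv.Perm Zstar) {n : ℤ} (h : n ≠ 0) :
    (extPerm ρ).symm n = (ρ.symm ⟨n, h⟩).val := by
  show (extPerm ρ).invFun n = _
  simp [extPerm, h]

lemma extPerm_eq_zero_iff (ρ : Equiv.Perm Zstar) {n : ℤ} : extPerm ρ n = 0 ↔ n = 0 := by
  constructor
  · intro h
    by_contra hn
    rw [extPerm_ne ρ hn] at h
    exact (ρ ⟨n, hn⟩).2 h
  · rintro rfl; simp

lemma extPerm_symm_eq_zero_iff (ρ : Equiv.Perm Zstar) {n : ℤ} :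
    (extPerm ρ).symm n = 0 ↔ n = 0 := by
  constructor
  · intro h
    have := congrArg (extPerm ρ) h
    rwa [Equiv.apply_symm_apply, extPerm_zero] at this
  · rintro rfl
    have := congrArg (extPerm ρ).symm (extPerm_zero ρ)
    rwa [Equiv.symm_apply_apply] at this

lemma extPerm_val (ρ : Equiv.Perm Zstar) (j : Zstar) : extPerm ρ j.val = (ρ j).val := by
  rw [extPerm_ne ρ j.2]

/-- right action of `x` on coset representatives. -/
def Px : Equiv.Perm (ℤ × ℤ) where
  toFun p := (p.1, p.2 + 1)
  invFun p := (p.1, p.2 - 1)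
  left_inv p := by simp
  right_inv p := by simp

/-- right action of `y` on coset representatives. -/
def Py (ρ : Equiv.Perm Zstar) : Equiv.Perm (ℤ × ℤ) where
  toFun p := (p.1, (extPerm ρ).symm (extPerm ρ p.2 + 1))
  invFun p := (p.1, (extPerm ρ).symm (extPerm ρ p.2 - 1))
  left_inv p := by simp
  right_inv p := by simp

/-- right action of `z` on coset representatives. -/
def Pz (ρ θ : Equiv.Perm Zstar) : Equiv.Perm (ℤ × ℤ) where
  toFun p := if p.2 = 0 then (p.1 + 1, 0) else (p.1, (extPerm ρ).symm (extPerm θ p.2))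
  invFun p := if p.2 = 0 then (p.1 - 1, 0) else (p.1, (extPerm θ).symm (extPerm ρ p.2))
  left_inv := by
    rintro ⟨l, j⟩
    by_cases h : j = 0
    · subst h; simp
    · have h2 : (extPerm ρ).symm (extPerm θ j) ≠ 0 := by
        rw [Ne, extPerm_symm_eq_zero_iff, extPerm_eq_zero_iff]; exact h
      simp [h, h2]
  right_inv := by
    rintro ⟨l, j⟩
    by_cases h : j = 0
    · subst h; simp
    · have h2 : (extPerm θ).symm (extPerm ρ j) ≠ 0 := by
        rw [Ne, extPerm_symm_eq_zero_iff, extPerm_eq_zero_iff]; exact h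
      simp [h, h2]

lemma Px_apply (p : ℤ × ℤ) : Px p = (p.1, p.2 + 1) := rfl
lemma Px_symm_apply (p : ℤ × ℤ) : Px.symm p = (p.1, p.2 - 1) := rfl
lemma Py_apply (ρ : Equiv.Perm Zstar) (p : ℤ × ℤ) :
    Py ρ p = (p.1, (extPerm ρ).symm (extPerm ρ p.2 + 1)) := rfl
lemma Py_symm_apply (ρ : Equiv.Perm Zstar) (p : ℤ × ℤ) :
    (Py ρ).symm p = (p.1, (extPerm ρ).symm (extPerm ρ p.2 - 1)) := rfl
lemma Pz_apply (ρ θ : Equiv.Perm Zstar) (p : ℤ × ℤ) :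
    Pz ρ θ p = if p.2 = 0 then (p.1 + 1, 0) else (p.1, (extPerm ρ).symm (extPerm θ p.2)) := rfl
lemma Pz_symm_apply (ρ θ : Equiv.Perm Zstar) (p : ℤ × ℤ) :
    (Pz ρ θ).symm p
      = if p.2 = 0 then (p.1 - 1, 0) else (p.1, (extPerm θ).symm (extPerm ρ p.2)) := rfl

lemma Px_inv_apply (p : ℤ × ℤ) : Px⁻¹ p = (p.1, p.2 - 1) := rfl
lemma Py_inv_apply (ρ : Equiv.Perm Zstar) (p : ℤ × ℤ) :
    (Py ρ)⁻¹ p = (p.1, (extPerm ρ).symm (extPerm ρ p.2 - 1)) := rfl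
lemma Pz_inv_apply (ρ θ : Equiv.Perm Zstar) (p : ℤ × ℤ) :
    (Pz ρ θ)⁻¹ p
      = if p.2 = 0 then (p.1 - 1, 0) else (p.1, (extPerm θ).symm (extPerm ρ p.2)) := rfl

lemma px_zpow (m : ℤ) (p : ℤ × ℤ) : (Px ^ m) p = (p.1, p.2 + m) := by
  induction m using Int.induction_on with
  | zero => simp
  | succ k ih =>
      rw [show ((k : ℤ) + 1) = 1 + k by ring, zpow_add, zpow_one, Equiv.Perm.mul_apply, ih,
        Px_apply]
      simp; ring
  | pred k ih =>
      rw [show (-(k : ℤ) - 1) = -1 + -k by ring, zpow_add, zpow_neg_one, Equiv.Perm.mul_apply,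
        ih, Px_inv_apply]
      simp; ring

lemma py_zpow (ρ : Equiv.Perm Zstar) (m : ℤ) (p : ℤ × ℤ) :
    (Py ρ ^ m) p = (p.1, (extPerm ρ).symm (extPerm ρ p.2 + m)) := by
  induction m using Int.induction_on with
  | zero => simp
  | succ k ih =>
      rw [show ((k : ℤ) + 1) = 1 + k by ring, zpow_add, zpow_one, Equiv.Perm.mul_apply, ih,
        Py_apply]
      simp only [Equiv.apply_symm_apply]
      congr 1
      congr 1
      ring
  | pred k ih =>
      rw [show (-(k : ℤ) - 1) = -1 + -k by ring, zpow_add, zpow_neg_one, Equiv.Perm.mul_apply,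
        ih, Py_inv_apply]
      simp only [Equiv.apply_symm_apply]
      congr 1
      congr 1
      ring

lemma pz_zpow (ρ θ : Equiv.Perm Zstar) (m l : ℤ) : (Pz ρ θ ^ m) (l, 0) = (l + m, 0) := by
  induction m using Int.induction_on with
  | zero => simp
  | succ k ih =>
      rw [show ((k : ℤ) + 1) = 1 + k by ring, zpow_add, zpow_one, Equiv.Perm.mul_apply, ih,
        Pz_apply]
      simp [Prod.ext_iff]
      ring
  | pred k ih =>
      rw [show (-(k : ℤ) - 1) = -1 + -k by ring, zpow_add, zpow_neg_one, Equiv.Perm.mul_apply,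
        ih, Pz_inv_apply]
      simp [Prod.ext_iff]
      ring

end Aux

section Main

variable (ρ θ : Equiv.Perm Zstar)

/-- The permutations by which the generators act on the right on coset representatives. -/
def Pgen : Fin 3 → Equiv.Perm (ℤ × ℤ) := ![Px, Py ρ, Pz ρ θ]

/-- The action homomorphism (generators act by the inverses of `Pgen`). -/
def actMap : F3 →* Equiv.Perm (ℤ × ℤ) :=
  FreeGroup.lift (fun i => (Pgen ρ θ i)⁻¹)

lemma actMap_of (i : Fin 3) : actMap ρ θ (FreeGroup.of i) = (Pgen ρ θ i)⁻¹ :=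
  FreeGroup.lift_apply_of

lemma act_gx : actMap ρ θ gx = Px⁻¹ := by
  rw [gx, actMap_of]; rfl

lemma act_gy : actMap ρ θ gy = (Py ρ)⁻¹ := by
  rw [gy, actMap_of]; rfl

lemma act_gz : actMap ρ θ gz = (Pz ρ θ)⁻¹ := by
  rw [gz, actMap_of]; rfl

lemma rho_symm_val {n : ℤ} (h : n ≠ 0) :
    (extPerm ρ).symm ((ρ ⟨n, h⟩).val) = n := by
  rw [extPerm_symm_ne ρ (ρ ⟨n, h⟩).2]
  simp

lemma act_v (j : Zstar) (l : ℤ) : actMap ρ θ (vgen ρ j l) (0, 0) = (0, 0) := by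
  have e : (extPerm ρ).symm ((ρ j).val) = j.val := by
    have := rho_symm_val ρ (n := j.val) j.2
    simpa using this
  simp only [vgen, map_mul, map_zpow, act_gx, act_gy, act_gz, inv_zpow', neg_neg,
    Equiv.Perm.mul_apply, pz_zpow, zero_add, py_zpow, extPerm_zero, e, px_zpow,
    add_neg_cancel, neg_add_cancel]

lemma act_w (j : Zstar) (l : ℤ) : actMap ρ θ (wgen θ j l) (0, 0) = (0, 0) := by
  have e : (extPerm θ).symm ((θ j).val) = j.val := by
    have := rho_symm_val θ (n := j.val) j.2
    simpa using this
  have hne : (extPerm ρ).symm ((θ j).val) ≠ 0 := by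
    rw [Ne, extPerm_symm_eq_zero_iff]
    exact (θ j).2
  simp only [wgen, map_mul, map_zpow, act_gx, act_gy, act_gz, inv_zpow', neg_neg, zpow_one,
    Equiv.Perm.mul_apply, pz_zpow, zero_add, py_zpow, extPerm_zero, px_zpow, Pz_inv_apply,
    if_neg hne, Equiv.apply_symm_apply, e, add_neg_cancel, neg_add_cancel]

lemma sElem_mem (p : SIdx) : sElem ρ θ p ∈ Hsub ρ θ :=
  Subgroup.subset_closure ⟨p, rfl⟩

lemma Hstab {h : F3} (hh : h ∈ Hsub ρ θ) : actMap ρ θ h (0, 0) = (0, 0) := by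
  have hle : Hsub ρ θ ≤
      (MulAction.stabilizer (Equiv.Perm (ℤ × ℤ)) ((0 : ℤ), (0 : ℤ))).comap (actMap ρ θ) := by
    rw [Hsub, Subgroup.closure_le]
    rintro _ ⟨p, rfl⟩
    simp only [Set.mem_setOf_eq, SetLike.mem_coe, Subgroup.mem_comap,
      MulAction.mem_stabilizer_iff, Equiv.Perm.smul_def]
    rcases p with ⟨j, l, b⟩
    cases b
    · simpa [sElem] using act_v ρ θ j l
    · simpa [sElem] using act_w ρ θ j l
  have := hle hh
  simpa [Subgroup.mem_comap, MulAction.mem_stabilizer_iff, Equiv.Perm.smul_def] using this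

/-- `ψ g` : the coordinates of the right coset of `g`. -/
def psiF (g : F3) : ℤ × ℤ := (actMap ρ θ g)⁻¹ (0, 0)

lemma psiF_mul (g s : F3) : psiF ρ θ (g * s) = (actMap ρ θ s)⁻¹ (psiF ρ θ g) := by
  simp [psiF, map_mul, mul_inv_rev, Equiv.Perm.mul_apply]

lemma psiF_c (l j : ℤ) : psiF ρ θ (cElem l j) = (l, j) := by
  simp only [psiF, cElem, map_mul, map_zpow, act_gx, act_gz, inv_zpow', mul_inv_rev,
    inv_inv, inv_zpow, neg_neg, Equiv.Perm.mul_apply]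
  rw [show ((Pz ρ θ ^ (-l))⁻¹) = Pz ρ θ ^ l by rw [← zpow_neg, neg_neg],
    show ((Px ^ (-j))⁻¹) = Px ^ j by rw [← zpow_neg, neg_neg], pz_zpow, px_zpow]
  simp

lemma psiF_H_mul {h : F3} (hh : h ∈ Hsub ρ θ) (g : F3) :
    psiF ρ θ (h * g) = psiF ρ θ g := by
  simp only [psiF, map_mul, mul_inv_rev, Equiv.Perm.mul_apply]
  congr 1
  have := Hstab ρ θ hh
  calc (actMap ρ θ h)⁻¹ (0, 0) = (actMap ρ θ h)⁻¹ (actMap ρ θ h (0, 0)) := by rw [this]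
    _ = (0, 0) := Equiv.symm_apply_apply _ _

lemma Umem (l j : ℤ) :
    gz ^ l * gx ^ j * gy ^ (-(extPerm ρ j)) * gz ^ (-l) ∈ Hsub ρ θ := by
  rcases eq_or_ne j 0 with rfl | h
  · have : gz ^ l * gx ^ (0 : ℤ) * gy ^ (-(extPerm ρ 0)) * gz ^ (-l) = 1 := by
      rw [extPerm_zero]; group
    rw [this]; exact one_mem _
  · have : gz ^ l * gx ^ j * gy ^ (-(extPerm ρ j)) * gz ^ (-l)
        = sElem ρ θ (⟨j, h⟩, -l, false) := by
      simp only [sElem, Bool.false_eq_true, if_false, vgen, neg_neg, extPerm_ne ρ h]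
    rw [this]; exact sElem_mem ρ θ _

lemma Wmem (l : ℤ) {j : ℤ} (h : j ≠ 0) :
    gz ^ l * gx ^ j * gz * gy ^ (-(extPerm θ j)) * gz ^ (-l) ∈ Hsub ρ θ := by
  have : gz ^ l * gx ^ j * gz * gy ^ (-(extPerm θ j)) * gz ^ (-l)
      = sElem ρ θ (⟨j, h⟩, -l, true) := by
    simp only [sElem, if_true, wgen, neg_neg, extPerm_ne θ h]
  rw [this]; exact sElem_mem ρ θ _

lemma step_y (l j m j' : ℤ) (hj' : extPerm ρ j' = extPerm ρ j + m) :
    cElem l j * gy ^ m * (cElem l j')⁻¹ ∈ Hsub ρ θ := by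
  have key : cElem l j * gy ^ m * (cElem l j')⁻¹
      = (gz ^ l * gx ^ j * gy ^ (-(extPerm ρ j)) * gz ^ (-l)) *
        (gz ^ l * gx ^ j' * gy ^ (-(extPerm ρ j')) * gz ^ (-l))⁻¹ := by
    rw [cElem, cElem, hj']
    group
  rw [key]
  exact mul_mem (Umem ρ θ l j) (inv_mem (Umem ρ θ l j'))

lemma step_z (l : ℤ) {j : ℤ} (h : j ≠ 0) :
    cElem l j * gz * (cElem l ((extPerm ρ).symm (extPerm θ j)))⁻¹ ∈ Hsub ρ θ := by
  set j' := (extPerm ρ).symm (extPerm θ j) with hj'def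
  have hj' : extPerm ρ j' = extPerm θ j := Equiv.apply_symm_apply _ _
  have key : cElem l j * gz * (cElem l j')⁻¹
      = (gz ^ l * gx ^ j * gz * gy ^ (-(extPerm θ j)) * gz ^ (-l)) *
        (gz ^ l * gx ^ j' * gy ^ (-(extPerm ρ j')) * gz ^ (-l))⁻¹ := by
    rw [cElem, cElem, hj']
    group
  rw [key]
  exact mul_mem (Wmem ρ θ l h) (inv_mem (Umem ρ θ l j'))

lemma step_z_inv (l : ℤ) {j : ℤ} (h : j ≠ 0) :
    cElem l j * gz⁻¹ * (cElem l ((extPerm θ).symm (extPerm ρ j)))⁻¹ ∈ Hsub ρ θ := by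
  set j' := (extPerm θ).symm (extPerm ρ j) with hj'def
  have hj'0 : j' ≠ 0 := by
    rw [hj'def, Ne, extPerm_symm_eq_zero_iff, extPerm_eq_zero_iff]
    exact h
  have hj' : extPerm θ j' = extPerm ρ j := Equiv.apply_symm_apply _ _
  have key : cElem l j * gz⁻¹ * (cElem l j')⁻¹
      = (gz ^ l * gx ^ j * gy ^ (-(extPerm ρ j)) * gz ^ (-l)) *
        (gz ^ l * gx ^ j' * gz * gy ^ (-(extPerm θ j')) * gz ^ (-l))⁻¹ := by
    rw [cElem, cElem, hj']
    group
  rw [key]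
  exact mul_mem (Umem ρ θ l j) (inv_mem (Wmem ρ θ l hj'0))

lemma step (i : Fin 3) (p : ℤ × ℤ) :
    cElem p.1 p.2 * FreeGroup.of i * (cElem (Pgen ρ θ i p).1 (Pgen ρ θ i p).2)⁻¹
      ∈ Hsub ρ θ := by
  fin_cases i
  · -- x
    show cElem p.1 p.2 * gx * (cElem (Px p).1 (Px p).2)⁻¹ ∈ Hsub ρ θ
    rw [Px_apply]
    have : cElem p.1 p.2 * gx * (cElem p.1 (p.2 + 1))⁻¹ = 1 := by
      rw [cElem, cElem]; group
    rw [this]; exact one_mem _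
  · -- y
    show cElem p.1 p.2 * gy * (cElem (Py ρ p).1 (Py ρ p).2)⁻¹ ∈ Hsub ρ θ
    rw [Py_apply]
    have := step_y ρ θ p.1 p.2 1 ((extPerm ρ).symm (extPerm ρ p.2 + 1))
      (Equiv.apply_symm_apply _ _)
    simpa using this
  · -- z
    show cElem p.1 p.2 * gz * (cElem (Pz ρ θ p).1 (Pz ρ θ p).2)⁻¹ ∈ Hsub ρ θ
    by_cases h : p.2 = 0
    · rw [Pz_apply, if_pos h]
      have : cElem p.1 p.2 * gz * (cElem (p.1 + 1) (0 : ℤ))⁻¹ = 1 := by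
        rw [cElem, cElem, h]; group
      rw [this]; exact one_mem _
    · rw [Pz_apply, if_neg h]
      exact step_z ρ θ p.1 h

lemma step_inv (i : Fin 3) (p : ℤ × ℤ) :
    cElem p.1 p.2 * (FreeGroup.of i)⁻¹ *
      (cElem ((Pgen ρ θ i).symm p).1 ((Pgen ρ θ i).symm p).2)⁻¹ ∈ Hsub ρ θ := by
  fin_cases i
  · show cElem p.1 p.2 * gx⁻¹ * (cElem (Px.symm p).1 (Px.symm p).2)⁻¹ ∈ Hsub ρ θ
    rw [Px_symm_apply]
    have : cElem p.1 p.2 * gx⁻¹ * (cElem p.1 (p.2 - 1))⁻¹ = 1 := by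
      rw [cElem, cElem]; group
    rw [this]; exact one_mem _
  · show cElem p.1 p.2 * gy⁻¹ * (cElem ((Py ρ).symm p).1 ((Py ρ).symm p).2)⁻¹ ∈ Hsub ρ θ
    rw [Py_symm_apply]
    have := step_y ρ θ p.1 p.2 (-1) ((extPerm ρ).symm (extPerm ρ p.2 - 1))
      (by rw [Equiv.apply_symm_apply]; ring)
    simpa [zpow_neg_one] using this
  · show cElem p.1 p.2 * gz⁻¹ * (cElem ((Pz ρ θ).symm p).1 ((Pz ρ θ).symm p).2)⁻¹ ∈ Hsub ρ θ
    by_cases h : p.2 = 0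
    · rw [Pz_symm_apply, if_pos h]
      have : cElem p.1 p.2 * gz⁻¹ * (cElem (p.1 - 1) (0 : ℤ))⁻¹ = 1 := by
        rw [cElem, cElem, h]; group
      rw [this]; exact one_mem _
    · rw [Pz_symm_apply, if_neg h]
      exact step_z_inv ρ θ p.1 h

end Main

section Final

variable (ρ θ : Equiv.Perm Zstar)

lemma actMap_of_inv (i : Fin 3) : (actMap ρ θ (FreeGroup.of i))⁻¹ = Pgen ρ θ i := by
  rw [actMap_of, inv_inv]

lemma reach (g : F3) :
    g * (cElem (psiF ρ θ g).1 (psiF ρ θ g).2)⁻¹ ∈ Hsub ρ θ := by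
  suffices h : ∀ g : F3, ∀ a : F3,
      a * (cElem (psiF ρ θ a).1 (psiF ρ θ a).2)⁻¹ ∈ Hsub ρ θ →
      (a * g) * (cElem (psiF ρ θ (a * g)).1 (psiF ρ θ (a * g)).2)⁻¹ ∈ Hsub ρ θ by
    have h1 : (1 : F3) * (cElem (psiF ρ θ 1).1 (psiF ρ θ 1).2)⁻¹ ∈ Hsub ρ θ := by
      have e : psiF ρ θ 1 = (0, 0) := by simp [psiF]
      rw [e]
      have : (1 : F3) * (cElem 0 0)⁻¹ = 1 := by rw [cElem]; group
      rw [this]; exact one_mem _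
    have := h g 1 h1
    simpa using this
  intro g
  induction g using FreeGroup.induction_on with
  | C1 =>
      intro a ha; simpa using ha
  | of i =>
      intro a ha
      have hpsi : psiF ρ θ (a * FreeGroup.of i) = Pgen ρ θ i (psiF ρ θ a) := by
        rw [psiF_mul, actMap_of_inv]
      rw [hpsi]
      have key := step ρ θ i (psiF ρ θ a)
      have split : a * FreeGroup.of i *
          (cElem (Pgen ρ θ i (psiF ρ θ a)).1 (Pgen ρ θ i (psiF ρ θ a)).2)⁻¹
          = (a * (cElem (psiF ρ θ a).1 (psiF ρ θ a).2)⁻¹) *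
            (cElem (psiF ρ θ a).1 (psiF ρ θ a).2 * FreeGroup.of i *
              (cElem (Pgen ρ θ i (psiF ρ θ a)).1 (Pgen ρ θ i (psiF ρ θ a)).2)⁻¹) := by
        group
      rw [split]
      exact mul_mem ha key
  | inv_of i _ =>
      intro a ha
      have hpsi : psiF ρ θ (a * (FreeGroup.of i)⁻¹)
          = (Pgen ρ θ i).symm (psiF ρ θ a) := by
        rw [psiF_mul, map_inv, inv_inv, actMap_of]
        rfl
      rw [hpsi]
      have key := step_inv ρ θ i (psiF ρ θ a)
      have split : a * (FreeGroup.of i)⁻¹ *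
          (cElem ((Pgen ρ θ i).symm (psiF ρ θ a)).1 ((Pgen ρ θ i).symm (psiF ρ θ a)).2)⁻¹
          = (a * (cElem (psiF ρ θ a).1 (psiF ρ θ a).2)⁻¹) *
            (cElem (psiF ρ θ a).1 (psiF ρ θ a).2 * (FreeGroup.of i)⁻¹ *
              (cElem ((Pgen ρ θ i).symm (psiF ρ θ a)).1
                ((Pgen ρ θ i).symm (psiF ρ θ a)).2)⁻¹) := by
        group
      rw [split]
      exact mul_mem ha key
  | mul g1 g2 h1 h2 =>
      intro a ha
      rw [← mul_assoc]
      exact h2 _ (h1 a ha)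

end Final

/-- `(l, j) ↦ H·(z^l x^j)` is a bijection from `ℤ²` onto the set of right
cosets of `H` in `F`; in particular `H` has infinite index in `F`.  (The statement for
`H̃ ≤ F̃` is the same statement, for the permutations `ρ̃, θ̃`.) -/
theorem stmt5 (ρ θ : Equiv.Perm Zstar) :
    Function.Bijective
      (fun p : ℤ × ℤ =>
        Quotient.mk (QuotientGroup.rightRel (Hsub ρ θ)) (cElem p.1 p.2)) ∧
    (Hsub ρ θ).index = 0 := by
  have hbij : Function.Bijective
      (fun p : ℤ × ℤ =>
        Quotient.mk (QuotientGroup.rightRel (Hsub ρ θ)) (cElem p.1 p.2)) := by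
    constructor
    · intro p q h
      have hrel := Quotient.exact h
      have hmem : cElem q.1 q.2 * (cElem p.1 p.2)⁻¹ ∈ Hsub ρ θ :=
        QuotientGroup.rightRel_apply.mp hrel
      have e1 : cElem q.1 q.2
          = (cElem q.1 q.2 * (cElem p.1 p.2)⁻¹) * cElem p.1 p.2 := by group
      have e2 : psiF ρ θ (cElem q.1 q.2) = psiF ρ θ (cElem p.1 p.2) := by
        rw [e1, psiF_H_mul ρ θ hmem]
      rw [psiF_c, psiF_c] at e2
      simpa only [Prod.mk.eta] using e2.symm
    · intro q
      obtain ⟨g, rfl⟩ := Quotient.exists_rep q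
      refine ⟨psiF ρ θ g, ?_⟩
      exact Quotient.sound (QuotientGroup.rightRel_apply.mpr (reach ρ θ g))
  refine ⟨hbij, ?_⟩
  rw [Subgroup.index_eq_card]
  have e : (ℤ × ℤ) ≃ (F3 ⧸ Hsub ρ θ) :=
    (Equiv.ofBijective _ hbij).trans
      (QuotientGroup.quotientRightRelEquivQuotientLeftRel (Hsub ρ θ))
  haveI : Infinite (F3 ⧸ Hsub ρ θ) := Infinite.of_injective e e.injective
  exact Nat.card_eq_zero_of_infinite
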